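/- On a Hitomezashi loop, the y-coordinates of the starting vertices of all edges lying on a fixed vertical line x = a have the same parity. -/

import Mathlib

/-- The Hitomezashi pattern determined by sequences `ε η : ℤ → ZMod 2`:
horizontal edges `{(i,j),(i+1,j)}` when `i ≡ η j (mod 2)` and
vertical edges `{(i,j),(i,j+1)}` when `j ≡ ε i (mod 2)`. -/
def Hitomezashi (ε η : ℤ → ZMod 2) : SimpleGraph (ℤ × ℤ) :=
  SimpleGraph.fromRel (fun v w =>
    (w = (v.1 + 1, v.2) ∧ (v.1 : ZMod 2) = η v.2) ∨
    (w = (v.1, v.2 + 1) ∧ (v.2 : ZMod 2) = ε v.1))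

namespace HitomezashiAux

open SimpleGraph

lemma two_zmod : (2 : ZMod 2) = 0 := by decide

/-- Classification of the darts of a Hitomezashi graph into the four types:
right, left, up, down. -/
lemma dart_cases (ε η : ℤ → ZMod 2) (d : (Hitomezashi ε η).Dart) :
    (d.snd = (d.fst.1 + 1, d.fst.2) ∧ (d.fst.1 : ZMod 2) = η d.fst.2) ∨
    (d.fst = (d.snd.1 + 1, d.snd.2) ∧ (d.snd.1 : ZMod 2) = η d.snd.2) ∨
    (d.snd = (d.fst.1, d.fst.2 + 1) ∧ (d.fst.2 : ZMod 2) = ε d.fst.1) ∨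
    (d.fst = (d.snd.1, d.snd.2 + 1) ∧ (d.snd.2 : ZMod 2) = ε d.snd.1) := by
  have h := d.adj
  simp only [Hitomezashi, SimpleGraph.fromRel_adj] at h
  tauto

/-- The parity of the sum of coordinates of the start of a dart. -/
def S (ε η : ℤ → ZMod 2) (d : (Hitomezashi ε η).Dart) : ZMod 2 :=
  (d.fst.1 : ZMod 2) + (d.fst.2 : ZMod 2)

/-- `T d = 0` iff the dart is vertical, `1` iff horizontal. -/
def T (ε η : ℤ → ZMod 2) (d : (Hitomezashi ε η).Dart) : ZMod 2 :=
  (d.fst.1 : ZMod 2) + (d.snd.1 : ZMod 2)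

lemma S_step (ε η : ℤ → ZMod 2) (d d' : (Hitomezashi ε η).Dart)
    (h : d.snd = d'.fst) : S ε η d' = S ε η d + 1 := by
  rcases dart_cases ε η d with ⟨he, -⟩ | ⟨he, -⟩ | ⟨he, -⟩ | ⟨he, -⟩
  · simp only [S, ← h]
    rw [he]
    push_cast
    ring
  · simp only [S, ← h]
    rw [he]
    push_cast
    linear_combination -two_zmod
  · simp only [S, ← h]
    rw [he]
    push_cast
    ring
  · simp only [S, ← h]
    rw [he]
    push_cast
    linear_combination -two_zmod

lemma T_right (ε η : ℤ → ZMod 2) (d : (Hitomezashi ε η).Dart)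
    (he : d.snd = (d.fst.1 + 1, d.fst.2)) : T ε η d = 1 := by
  simp only [T, he]
  push_cast
  linear_combination (d.fst.1 : ZMod 2) * two_zmod

lemma T_left (ε η : ℤ → ZMod 2) (d : (Hitomezashi ε η).Dart)
    (he : d.fst = (d.snd.1 + 1, d.snd.2)) : T ε η d = 1 := by
  simp only [T, he]
  push_cast
  linear_combination (d.snd.1 : ZMod 2) * two_zmod

lemma T_up (ε η : ℤ → ZMod 2) (d : (Hitomezashi ε η).Dart)
    (he : d.snd = (d.fst.1, d.fst.2 + 1)) : T ε η d = 0 := by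
  simp only [T, he]
  linear_combination (d.fst.1 : ZMod 2) * two_zmod

lemma T_down (ε η : ℤ → ZMod 2) (d : (Hitomezashi ε η).Dart)
    (he : d.fst = (d.snd.1, d.snd.2 + 1)) : T ε η d = 0 := by
  simp only [T, he]
  linear_combination (d.snd.1 : ZMod 2) * two_zmod

lemma edge_eq_of_swap (ε η : ℤ → ZMod 2) (d d' : (Hitomezashi ε η).Dart)
    (h1 : d'.fst = d.snd) (h2 : d'.snd = d.fst) : d'.edge = d.edge := by
  have hsw : d'.toProd = (d.snd, d.fst) := Prod.ext h1 h2
  show s(d'.fst, d'.snd) = s(d.fst, d.snd)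
  rw [h1, h2]
  exact (Sym2.eq_swap)

lemma T_step (ε η : ℤ → ZMod 2) (d d' : (Hitomezashi ε η).Dart)
    (h : d.snd = d'.fst) (hne : d.edge ≠ d'.edge) : T ε η d' = T ε η d + 1 := by
  have key : T ε η d' ≠ T ε η d := by
    rcases dart_cases ε η d with ⟨he, hc⟩ | ⟨he, hc⟩ | ⟨he, hc⟩ | ⟨he, hc⟩ <;>
    rcases dart_cases ε η d' with ⟨he', hc'⟩ | ⟨he', hc'⟩ | ⟨he', hc'⟩ | ⟨he', hc'⟩
    -- d right
    · -- right, right : η contradiction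
      exfalso
      have h2 : d'.fst = (d.fst.1 + 1, d.fst.2) := by rw [← h, he]
      rw [h2] at hc'
      simp only [Prod.fst, Prod.snd] at hc'
      push_cast at hc'
      exact one_ne_zero (by linear_combination hc' - hc)
    · -- right, left : same edge
      exfalso
      apply hne
      refine (edge_eq_of_swap ε η d d' h.symm ?_).symm
      have h2 : (d'.snd.1 + 1, d'.snd.2) = (d.fst.1 + 1, d.fst.2) := by
        rw [← he', ← h, he]
      rw [Prod.ext_iff] at h2
      simp only at h2
      exact Prod.ext (by omega) h2.2
    · -- right, up : mismatch
      rw [T_right ε η d he, T_up ε η d' he']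
      decide
    · -- right, down : mismatch
      rw [T_right ε η d he, T_down ε η d' he']
      decide
    -- d left
    · -- left, right : same edge
      exfalso
      apply hne
      refine (edge_eq_of_swap ε η d d' h.symm ?_).symm
      rw [he', ← h, ← he]
    · -- left, left : η contradiction
      exfalso
      have h2 : d.snd = (d'.snd.1 + 1, d'.snd.2) := by rw [h, he']
      rw [h2] at hc
      simp only [Prod.fst, Prod.snd] at hc
      push_cast at hc
      exact one_ne_zero (by linear_combination hc - hc')
    · -- left, up : mismatch
      rw [T_left ε η d he, T_up ε η d' he']
      decide
    · -- left, down : mismatch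
      rw [T_left ε η d he, T_down ε η d' he']
      decide
    -- d up
    · -- up, right : mismatch
      rw [T_up ε η d he, T_right ε η d' he']
      decide
    · -- up, left : mismatch
      rw [T_up ε η d he, T_left ε η d' he']
      decide
    · -- up, up : ε contradiction
      exfalso
      have h2 : d'.fst = (d.fst.1, d.fst.2 + 1) := by rw [← h, he]
      rw [h2] at hc'
      simp only [Prod.fst, Prod.snd] at hc'
      push_cast at hc'
      exact one_ne_zero (by linear_combination hc' - hc)
    · -- up, down : same edge
      exfalso
      apply hne
      refine (edge_eq_of_swap ε η d d' h.symm ?_).symm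
      have h2 : (d'.snd.1, d'.snd.2 + 1) = (d.fst.1, d.fst.2 + 1) := by
        rw [← he', ← h, he]
      rw [Prod.ext_iff] at h2
      simp only at h2
      exact Prod.ext h2.1 (by omega)
    -- d down
    · -- down, right : mismatch
      rw [T_down ε η d he, T_right ε η d' he']
      decide
    · -- down, left : mismatch
      rw [T_down ε η d he, T_left ε η d' he']
      decide
    · -- down, up : same edge
      exfalso
      apply hne
      refine (edge_eq_of_swap ε η d d' h.symm ?_).symm
      rw [he', ← h, ← he]
    · -- down, down : ε contradiction
      exfalso
      have h2 : d.snd = (d'.snd.1, d'.snd.2 + 1) := by rw [h, he']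
      rw [h2] at hc
      simp only [Prod.fst, Prod.snd] at hc
      push_cast at hc
      exact one_ne_zero (by linear_combination hc - hc')
  revert key
  generalize T ε η d' = x
  generalize T ε η d = y
  revert x y
  decide

/-- A function on a list that increases by `1 : ZMod 2` at each step. -/
lemma list_step {α : Type*} (f : α → ZMod 2) (L : List α)
    (hstep : ∀ i, (h : i + 1 < L.length) → f (L[i + 1]) = f (L[i]'(by omega)) + 1) :
    ∀ i, (h : i < L.length) → f (L[i]) = f (L[0]'(by omega)) + i := by
  intro i
  induction i with
  | zero => intro h; simp
  | succ n ih =>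
    intro h
    rw [hstep n h, ih (by omega)]
    push_cast
    ring

end HitomezashiAux

/-- On a Hitomezashi loop, starting y-coordinates of all edges on a fixed vertical
line `x = a` have the same parity. -/
theorem hitomezashi_loop_parity (ε η : ℤ → ZMod 2) (v : ℤ × ℤ)
    (p : (Hitomezashi ε η).Walk v v) (hp : p.IsCycle) (a : ℤ)
    (d d' : (Hitomezashi ε η).Dart) (hd : d ∈ p.darts) (hd' : d' ∈ p.darts)
    (hda : d.fst.1 = a ∧ d.snd.1 = a) (hd'a : d'.fst.1 = a ∧ d'.snd.1 = a) :
    d.fst.2 ≡ d'.fst.2 [ZMOD 2] := by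
  classical
  open HitomezashiAux in
  set L := p.darts with hL
  have hchain : List.IsChain (Hitomezashi ε η).DartAdj L := p.isChain_dartAdj_darts
  rw [List.isChain_iff_getElem] at hchain
  have hnodup : (L.map SimpleGraph.Dart.edge).Nodup := hp.edges_nodup
  have hadj : ∀ i, (h : i + 1 < L.length) → (L[i]'(by omega)).snd = (L[i+1]).fst := by
    intro i h
    have := hchain i (by omega)
    simpa [SimpleGraph.DartAdj, List.get_eq_getElem] using this
  have hneq : ∀ i, (h : i + 1 < L.length) →
      (L[i]'(by omega)).edge ≠ (L[i+1]).edge := by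
    intro i h heq
    have hi1 : i < (L.map SimpleGraph.Dart.edge).length := by simpa using by omega
    have hi2 : i + 1 < (L.map SimpleGraph.Dart.edge).length := by simpa using h
    have h1 : (L.map SimpleGraph.Dart.edge)[i]'hi1 =
        (L.map SimpleGraph.Dart.edge)[i+1]'hi2 := by
      simpa using heq
    have := hnodup.getElem_inj_iff.mp h1
    omega
  have hSstep : ∀ i, (h : i + 1 < L.length) →
      HitomezashiAux.S ε η (L[i+1]) = HitomezashiAux.S ε η (L[i]'(by omega)) + 1 :=
    fun i h => HitomezashiAux.S_step ε η _ _ (hadj i h)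
  have hTstep : ∀ i, (h : i + 1 < L.length) →
      HitomezashiAux.T ε η (L[i+1]) = HitomezashiAux.T ε η (L[i]'(by omega)) + 1 :=
    fun i h => HitomezashiAux.T_step ε η _ _ (hadj i h) (hneq i h)
  obtain ⟨i, hi, hdi⟩ := List.mem_iff_getElem.mp hd
  obtain ⟨j, hj, hdj⟩ := List.mem_iff_getElem.mp hd'
  have hpos : 0 < L.length := by omega
  have hSi := HitomezashiAux.list_step (HitomezashiAux.S ε η) L hSstep i hi
  have hSj := HitomezashiAux.list_step (HitomezashiAux.S ε η) L hSstep j hj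
  have hTi := HitomezashiAux.list_step (HitomezashiAux.T ε η) L hTstep i hi
  have hTj := HitomezashiAux.list_step (HitomezashiAux.T ε η) L hTstep j hj
  rw [hdi] at hSi hTi
  rw [hdj] at hSj hTj
  have hTd : HitomezashiAux.T ε η d = 0 := by
    simp only [HitomezashiAux.T, hda.1, hda.2]
    linear_combination (a : ZMod 2) * HitomezashiAux.two_zmod
  have hTd' : HitomezashiAux.T ε η d' = 0 := by
    simp only [HitomezashiAux.T, hd'a.1, hd'a.2]
    linear_combination (a : ZMod 2) * HitomezashiAux.two_zmod
  have hij : (i : ZMod 2) = (j : ZMod 2) := by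
    have h0 : HitomezashiAux.T ε η (L[0]'hpos) + (i : ZMod 2) =
        HitomezashiAux.T ε η (L[0]'hpos) + (j : ZMod 2) := by
      rw [← hTi, ← hTj, hTd, hTd']
    exact add_left_cancel h0
  have hy : ((d.fst.2 : ℤ) : ZMod 2) = ((d'.fst.2 : ℤ) : ZMod 2) := by
    have h1 : ((a : ℤ) : ZMod 2) + (d.fst.2 : ZMod 2) =
        HitomezashiAux.S ε η (L[0]'hpos) + (i : ZMod 2) := by
      rw [← hSi, HitomezashiAux.S, hda.1]
    have h2 : ((a : ℤ) : ZMod 2) + (d'.fst.2 : ZMod 2) =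
        HitomezashiAux.S ε η (L[0]'hpos) + (j : ZMod 2) := by
      rw [← hSj, HitomezashiAux.S, hd'a.1]
    have h3 := h1.trans (by rw [hij, ← h2])
    exact add_left_cancel h3
  exact (ZMod.intCast_eq_intCast_iff _ _ _).mp hy
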